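/- Let n ≥ 1, m ≥ 0, c > 0, H ∈ ℝ, σ ∈ ℝ, and let a be the FLRW scale function a(t) = a₀(1 + n(1+σ)Ht/2)^{2/(n(1+σ))} for σ ≠ −1 (a(t) = a₀ e^{Ht} for σ = −1). Define the curved mass by M²(t) = m² − (n(n−2)/(4c²))(ȧ/a)² − (n/(2c²))(ä/a). Then M²(t) = m² + σ (nH/(2c))² (1 + n(1+σ)Ht/2)^{−2} for all t in the domain of a. -/

import Mathlib

private lemma stmt_6_alg (n σ H c m X a₀ Y : ℝ) (hA : n * (1 + σ) ≠ 0) (hc : c ≠ 0)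
    (hX : X ≠ 0) (ha₀ : a₀ ≠ 0) (hY : Y ≠ 0) :
    m ^ 2
      - (n * (n - 2) / (4 * c ^ 2)) *
        ((a₀ * (n * (1 + σ) * H / 2 * (2 / (n * (1 + σ))) * (Y / X))) / (a₀ * Y)) ^ 2
      - (n / (2 * c ^ 2)) *
        ((a₀ * (n * (1 + σ) * H / 2 * (2 / (n * (1 + σ))) *
          (n * (1 + σ) * H / 2 * (2 / (n * (1 + σ)) - 1) * (Y / X / X)))) / (a₀ * Y))
      = m ^ 2 + σ * (n * H / (2 * c)) ^ 2 * (X * X)⁻¹ := by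
  have h1σ : 1 + σ ≠ 0 := right_ne_zero_of_mul hA
  have hn' : n ≠ 0 := left_ne_zero_of_mul hA
  field_simp
  ring

/-- The curved mass M² = m² - (n(n-2)/4c²)(ȧ/a)² - (n/2c²)(ä/a) in an FLRW spacetime
equals m² + σ(nH/2c)²(1 + n(1+σ)Ht/2)^{-2}. -/
theorem stmt_6 (n : ℕ) (hn : 1 ≤ n) (m c H σ a₀ : ℝ) (hm : 0 ≤ m) (hc : 0 < c)
    (ha₀ : 0 < a₀) (a Msq : ℝ → ℝ)
    (ha : ∀ t, a t =
      if σ = -1 then a₀ * Real.exp (H * t)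
      else a₀ * (1 + (n:ℝ) * (1 + σ) * H * t / 2) ^ (2 / ((n:ℝ) * (1 + σ))))
    (hM : ∀ t, Msq t = m ^ 2
      - ((n:ℝ) * ((n:ℝ) - 2) / (4 * c ^ 2)) * (deriv a t / a t) ^ 2
      - ((n:ℝ) / (2 * c ^ 2)) * (deriv (deriv a) t / a t)) :
    ∀ t : ℝ, 0 ≤ t → 0 < 1 + (n:ℝ) * (1 + σ) * H * t / 2 →
      Msq t = m ^ 2 + σ * ((n:ℝ) * H / (2 * c)) ^ 2
        * (1 + (n:ℝ) * (1 + σ) * H * t / 2) ^ (-(2:ℝ)) := by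
  intro t ht hX
  have hc' : c ≠ 0 := ne_of_gt hc
  have ha₀' : a₀ ≠ 0 := ne_of_gt ha₀
  by_cases hσ : σ = -1
  · -- exponential case
    subst hσ
    have haf : a = fun s => a₀ * Real.exp (H * s) := by
      funext s; rw [ha s, if_pos rfl]
    have hd1 : ∀ s : ℝ, HasDerivAt a (a₀ * (Real.exp (H * s) * H)) s := by
      intro s
      rw [haf]
      simpa using ((hasDerivAt_id s).const_mul H).exp.const_mul a₀
    have hda : deriv a = fun s => a₀ * (Real.exp (H * s) * H) := by
      funext s; exact (hd1 s).deriv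
    have hd2 : HasDerivAt (deriv a) (a₀ * (Real.exp (H * t) * H * H)) t := by
      rw [hda]
      have := (((hasDerivAt_id t).const_mul H).exp.mul_const H).const_mul a₀
      simpa [mul_assoc, mul_comm, mul_left_comm] using this
    have he : Real.exp (H * t) ≠ 0 := Real.exp_ne_zero _
    rw [hM t, (hd1 t).deriv, hd2.deriv, haf]
    simp only [neg_add_cancel, mul_zero, zero_mul, zero_div, add_zero, mul_one,
      Real.one_rpow]
    field_simp
    norm_num
    ring
  · -- power-law case
    set A : ℝ := (n:ℝ) * (1 + σ) with hA
    have hn0 : (n:ℝ) ≠ 0 := Nat.cast_ne_zero.mpr (by omega)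
    have hA0 : A ≠ 0 := by
      apply mul_ne_zero hn0
      intro h
      apply hσ
      linarith
    set p : ℝ := 2 / A with hp
    set k : ℝ := A * H / 2 with hk
    have haf : a = fun s => a₀ * (1 + k * s) ^ p := by
      funext s; rw [ha s, if_neg hσ, hk]
      ring_nf
    have hXt : 0 < 1 + k * t := by
      rw [hk, hA]; ring_nf; ring_nf at hX; linarith [hX]
    have hd1 : ∀ s : ℝ, 0 < 1 + k * s →
        HasDerivAt a (a₀ * (k * p * (1 + k * s) ^ (p - 1))) s := by
      intro s hs
      rw [haf]
      have h1 : HasDerivAt (fun u : ℝ => 1 + k * u) k s := by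
        simpa using ((hasDerivAt_id s).const_mul k).const_add 1
      have h2 := h1.rpow_const (p := p) (Or.inl (ne_of_gt hs))
      have := h2.const_mul a₀
      simpa [mul_assoc, mul_comm, mul_left_comm] using this
    have hopen : IsOpen {s : ℝ | 0 < 1 + k * s} :=
      isOpen_lt continuous_const (by continuity)
    have hmem : {s : ℝ | 0 < 1 + k * s} ∈ nhds t := hopen.mem_nhds hXt
    have hdeq : deriv a =ᶠ[nhds t] fun s => a₀ * (k * p * (1 + k * s) ^ (p - 1)) := by
      filter_upwards [hmem] with s hs
      exact (hd1 s hs).deriv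
    have hd2 : HasDerivAt (fun s => a₀ * (k * p * (1 + k * s) ^ (p - 1)))
        (a₀ * (k * p * (k * (p - 1) * (1 + k * t) ^ (p - 1 - 1)))) t := by
      have h1 : HasDerivAt (fun u : ℝ => 1 + k * u) k t := by
        simpa using ((hasDerivAt_id t).const_mul k).const_add 1
      have h2 := h1.rpow_const (p := p - 1) (Or.inl (ne_of_gt hXt))
      have := (h2.const_mul (k * p)).const_mul a₀
      simpa [mul_assoc, mul_comm, mul_left_comm] using this
    have hdd : deriv (deriv a) t
        = a₀ * (k * p * (k * (p - 1) * (1 + k * t) ^ (p - 1 - 1))) := by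
      rw [hdeq.deriv_eq]
      exact hd2.deriv
    set X : ℝ := 1 + k * t with hXdef
    have hX0 : X ≠ 0 := ne_of_gt hXt
    have hrp1 : X ^ (p - 1) = X ^ p / X := by
      rw [Real.rpow_sub hXt, Real.rpow_one]
    have hrp2 : X ^ (p - 1 - 1) = X ^ p / X / X := by
      rw [Real.rpow_sub hXt, Real.rpow_sub hXt, Real.rpow_one]
    have hY0 : X ^ p ≠ 0 := ne_of_gt (Real.rpow_pos_of_pos hXt p)
    have hXeq : 1 + (n:ℝ) * (1 + σ) * H * t / 2 = X := by
      rw [hXdef, hk, hA]; ring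
    have hrneg : X ^ (-(2:ℝ)) = (X * X)⁻¹ := by
      rw [show (-(2:ℝ)) = (-1) + (-1) by norm_num, Real.rpow_add hXt,
        Real.rpow_neg_one, mul_inv]
    have hns : (n:ℝ) * (1 + σ) ≠ 0 := by rw [← hA]; exact hA0
    rw [hM t, (hd1 t hXt).deriv, hdd, haf, hXeq, hrneg]
    simp only [← hXdef]
    rw [hrp1, hrp2, hp, hk, hA]
    exact stmt_6_alg (n:ℝ) σ H c m X a₀ (X ^ p) hns hc' hX0 ha₀' hY0
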